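/- arXiv:1204.5813 — 2 statements merged into one kernel-verified Lean document; each statement's English description precedes it below -/
import Mathlib

section
/- For all natural numbers N ≥ 1, the maximum of |T_{N+1}''(x)| over x ∈ [-1,1] equals N(N+1)²(N+2)/3, where T_n is the Chebyshev polynomial of the first kind. -/
open Polynomial Polynomial.Chebyshev

private lemma two_step {P : ℕ → Prop} (h0 : P 0) (h1 : P 1)
    (hstep : ∀ n, P n → P (n + 1) → P (n + 2)) : ∀ n, P n := by
  have key : ∀ n, P n ∧ P (n + 1) := by
    intro n
    induction n with
    | zero => exact ⟨h0, h1⟩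
    | succ k ih => exact ⟨ih.2, hstep k ih.1 ih.2⟩
  exact fun n => (key n).1

private lemma abs_sin_nat_mul_le (n : ℕ) (θ : ℝ) :
    |Real.sin (n * θ)| ≤ n * |Real.sin θ| := by
  induction n with
  | zero => simp
  | succ k ih =>
    have h : ((k : ℝ) + 1) * θ = k * θ + θ := by ring
    push_cast
    rw [h, Real.sin_add]
    calc |Real.sin (k*θ) * Real.cos θ + Real.cos (k*θ) * Real.sin θ|
        ≤ |Real.sin (k*θ) * Real.cos θ| + |Real.cos (k*θ) * Real.sin θ| := abs_add_le _ _
      _ ≤ |Real.sin (k*θ)| * 1 + 1 * |Real.sin θ| := by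
          rw [abs_mul, abs_mul]
          gcongr <;> exact Real.abs_cos_le_one _
      _ ≤ k * |Real.sin θ| + 1 * |Real.sin θ| := by
          rw [mul_one]
          gcongr
      _ = ((k : ℝ) + 1) * |Real.sin θ| := by ring

private lemma U_eval_pm (n : ℕ) :
    (U ℝ n).eval 1 = n + 1 ∧ (U ℝ n).eval (-1) = (-1 : ℝ) ^ n * (n + 1) := by
  induction n using two_step with
  | h0 => simp [U_zero]
  | h1 => norm_num [U_one]
  | hstep n ih1 ih2 =>
    have h : ((n : ℤ) + 1 + 1) = ((n + 2 : ℕ) : ℤ) := by push_cast; ring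
    have hU := U_add_two ℝ n
    rw [show ((n : ℤ) + 2) = ((n + 2 : ℕ) : ℤ) by push_cast; ring,
        show ((n : ℤ) + 1) = ((n + 1 : ℕ) : ℤ) by push_cast; ring] at hU
    constructor
    · rw [hU]
      simp only [eval_sub, eval_mul, eval_ofNat, eval_X, ih1.1, ih2.1]
      push_cast; ring
    · rw [hU]
      simp only [eval_sub, eval_mul, eval_ofNat, eval_X, ih1.2, ih2.2]
      push_cast; ring

private lemma U_bound (n : ℕ) {x : ℝ} (hx : x ∈ Set.Icc (-1 : ℝ) 1) :
    |(U ℝ n).eval x| ≤ n + 1 := by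
  obtain ⟨hx1, hx2⟩ := hx
  set θ := Real.arccos x with hθ
  have hcos : Real.cos θ = x := Real.cos_arccos hx1 hx2
  have hsin : Real.sin θ = Real.sqrt (1 - x ^ 2) := Real.sin_arccos x
  have hsin0 : 0 ≤ Real.sin θ := by rw [hsin]; positivity
  rcases eq_or_lt_of_le hsin0 with hs | hs
  · -- sin θ = 0, so x = 1 or x = -1
    have h0 : Real.sqrt (1 - x ^ 2) = 0 := by rw [← hsin, ← hs]
    have : 1 - x ^ 2 ≤ 0 := by
      by_contra hc
      push_neg at hc
      exact absurd h0 (ne_of_gt (Real.sqrt_pos.mpr hc))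
    have hx2' : x ^ 2 = 1 := le_antisymm (by nlinarith) (by nlinarith)
    have : x = 1 ∨ x = -1 := mul_self_eq_one_iff.mp (by nlinarith : x * x = 1)
    rcases this with rfl | rfl
    · rw [(U_eval_pm n).1]
      rw [abs_of_nonneg (by positivity)]
    · rw [(U_eval_pm n).2, abs_mul, abs_pow, abs_neg, abs_one, one_pow, one_mul,
        abs_of_nonneg (by positivity : (0:ℝ) ≤ (n:ℝ) + 1)]
  · -- sin θ > 0
    have key := U_real_cos θ n
    rw [hcos] at key
    have h1 : |(U ℝ n).eval x| * Real.sin θ = |Real.sin (((n : ℤ) + 1) * θ)| := by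
      rw [← abs_of_pos hs, ← abs_mul, key]
    have h2 : |Real.sin (((n : ℤ) + 1) * θ)| ≤ ((n : ℝ) + 1) * Real.sin θ := by
      have := abs_sin_nat_mul_le (n + 1) θ
      rw [abs_of_pos hs] at this
      push_cast at this ⊢
      convert this using 3
    have h3 : |(U ℝ n).eval x| * Real.sin θ ≤ ((n : ℝ) + 1) * Real.sin θ := h1 ▸ h2
    exact le_of_mul_le_mul_right h3 hs

private lemma U_rec' (n : ℤ) : U ℝ (n + 2) = U ℝ n + 2 * T ℝ (n + 2) := by
  have a := U_eq_X_mul_U_add_T ℝ (n + 1)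
  have b := U_add_two ℝ n
  rw [show (n : ℤ) + 1 + 1 = n + 2 by ring] at a
  linear_combination 2 * a - b

private lemma U_deriv_rec (n : ℤ) :
    derivative (U ℝ (n + 2)) =
      derivative (U ℝ n) + 2 * ((n : Polynomial ℝ) + 2) * U ℝ (n + 1) := by
  have h := congr_arg derivative (U_rec' n)
  have hT := T_derivative_eq_U (R := ℝ) (n + 2)
  rw [show (n : ℤ) + 2 - 1 = n + 1 by ring] at hT
  rw [h, derivative_add, derivative_mul, hT]
  simp only [derivative_ofNat, zero_mul]
  push_cast
  ring

private lemma dU_key (n : ℕ) :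
    (derivative (U ℝ n)).eval 1 = n * (n + 1) * (n + 2) / 3 ∧
      ∀ x ∈ Set.Icc (-1 : ℝ) 1,
        |(derivative (U ℝ n)).eval x| ≤ n * (n + 1) * (n + 2) / 3 := by
  induction n using two_step with
  | h0 => constructor <;> simp [U_zero]
  | h1 =>
    have h : derivative (U ℝ 1) = 2 := by
      rw [U_one]; simp [derivative_mul]
    simp only [Nat.cast_one]
    constructor
    · rw [h]; norm_num
    · intro x _
      rw [h]; norm_num
  | hstep n ih1 _ =>
    have hd := U_deriv_rec (n : ℤ)
    rw [show ((n : ℤ) + 2) = ((n + 2 : ℕ) : ℤ) by push_cast; ring,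
        show ((n : ℤ) + 1) = ((n + 1 : ℕ) : ℤ) by push_cast; ring] at hd
    have heval : ∀ x : ℝ, (derivative (U ℝ ((n + 2 : ℕ) : ℤ))).eval x =
        (derivative (U ℝ (n : ℤ))).eval x + 2 * ((n : ℝ) + 2) * (U ℝ ((n + 1 : ℕ) : ℤ)).eval x := by
      intro x
      rw [hd]
      simp [eval_add, eval_mul]
    have hval1 : (U ℝ ((n + 1 : ℕ) : ℤ)).eval 1 = (n : ℝ) + 1 + 1 := by
      have h5 := (U_eval_pm (n + 1)).1
      push_cast at h5 ⊢
      exact_mod_cast h5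
    constructor
    · rw [heval 1, ih1.1, hval1]
      push_cast
      ring
    · intro x hx
      rw [heval x]
      have hb := U_bound (n + 1) hx
      push_cast at hb
      calc |(derivative (U ℝ (n : ℤ))).eval x + 2 * ((n : ℝ) + 2) * (U ℝ ((n + 1 : ℕ) : ℤ)).eval x|
          ≤ |(derivative (U ℝ (n : ℤ))).eval x| + |2 * ((n : ℝ) + 2) * (U ℝ ((n + 1 : ℕ) : ℤ)).eval x| :=
            abs_add_le _ _
        _ ≤ n * (n + 1) * (n + 2) / 3 + 2 * ((n : ℝ) + 2) * ((n : ℝ) + 1 + 1) := by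
            gcongr
            · exact ih1.2 x hx
            · rw [abs_mul, abs_of_nonneg (by positivity : (0:ℝ) ≤ 2 * ((n : ℝ) + 2))]
              gcongr
              exact_mod_cast hb
        _ = (n : ℝ) * ((n : ℝ) + 1) * ((n : ℝ) + 2) / 3 + 2 * ((n : ℝ) + 2) ^ 2 := by ring
        _ = ((n : ℝ) + 2) * ((n : ℝ) + 2 + 1) * ((n : ℝ) + 2 + 2) / 3 := by ring
        _ = ((n + 2 : ℕ) : ℝ) * (((n + 2 : ℕ) : ℝ) + 1) * (((n + 2 : ℕ) : ℝ) + 2) / 3 := by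
            push_cast; ring

theorem stmt_11 (N : ℕ) (hN : 1 ≤ N) :
    IsGreatest
      ((fun x : ℝ => |(derivative (derivative (T ℝ (N + 1)))).eval x|) '' Set.Icc (-1) 1)
      ((N : ℝ) * ((N : ℝ) + 1) ^ 2 * ((N : ℝ) + 2) / 3) := by
  have hT : derivative (T ℝ ((N : ℤ) + 1)) = (((N : ℤ) + 1 : ℤ) : Polynomial ℝ) * U ℝ (N : ℤ) := by
    have := T_derivative_eq_U (R := ℝ) ((N : ℤ) + 1)
    rw [show (N : ℤ) + 1 - 1 = (N : ℤ) by ring] at this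
    exact this
  have hdd : ∀ x : ℝ, (derivative (derivative (T ℝ ((N : ℤ) + 1)))).eval x =
      ((N : ℝ) + 1) * (derivative (U ℝ (N : ℤ))).eval x := by
    intro x
    rw [hT, derivative_mul]
    have : derivative ((((N : ℤ) + 1 : ℤ) : Polynomial ℝ)) = 0 := by
      simp
    rw [this]
    simp
  have key := dU_key N
  constructor
  · refine ⟨1, by norm_num, ?_⟩
    simp only
    rw [hdd 1, key.1, abs_of_nonneg (by positivity)]
    ring
  · rintro y ⟨x, hx, rfl⟩
    simp only
    rw [hdd x, abs_mul, abs_of_nonneg (by positivity : (0:ℝ) ≤ (N : ℝ) + 1)]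
    calc ((N : ℝ) + 1) * |(derivative (U ℝ (N : ℤ))).eval x|
        ≤ ((N : ℝ) + 1) * ((N : ℝ) * ((N : ℝ) + 1) * ((N : ℝ) + 2) / 3) := by
          gcongr
          exact key.2 x hx
      _ = (N : ℝ) * ((N : ℝ) + 1) ^ 2 * ((N : ℝ) + 2) / 3 := by ring
end

section
/- Let N ≥ 2 and let u ∈ P_{N+1} and u_N ∈ P_N be real polynomials such that u_N(-1) = u(-1) and u_N' agrees with u' at all N roots of L_N - L_{N-1} (the left Legendre–Radau points). Then there exists a constant c with u(x) - u_N(x) = c·[ (N²/(N²-1))·(L_N(x) + L_{N-1}(x))·(x-1) - (N/(N²-1))·(L_N(x) - L_{N-1}(x))·(x+1) ] for all x. -/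
open Polynomial

noncomputable def legendre : ℕ → Polynomial ℝ
  | 0 => 1
  | 1 => Polynomial.X
  | (n + 2) =>
      Polynomial.C ((2 * (n : ℝ) + 3) / ((n : ℝ) + 2)) * Polynomial.X * legendre (n + 1)
        - Polynomial.C (((n : ℝ) + 1) / ((n : ℝ) + 2)) * legendre n


lemma legendre_rec (n : ℕ) :
    C ((n : ℝ) + 2) * legendre (n + 2) =
      C (2 * (n : ℝ) + 3) * X * legendre (n + 1) - C ((n : ℝ) + 1) * legendre n := by
  have h2 : ((n : ℝ) + 2) ≠ 0 := by positivity
  show C ((n : ℝ) + 2) * (C ((2 * (n : ℝ) + 3) / ((n : ℝ) + 2)) * X * legendre (n + 1)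
        - C (((n : ℝ) + 1) / ((n : ℝ) + 2)) * legendre n) = _
  rw [mul_sub]
  congr 1
  · rw [← mul_assoc, ← mul_assoc, ← C_mul, mul_div_cancel₀ _ h2]
  · rw [← mul_assoc, ← C_mul, mul_div_cancel₀ _ h2]

lemma legendre_AB (n : ℕ) :
    (X * derivative (legendre (n + 1)) - derivative (legendre n)
        = C ((n : ℝ) + 1) * legendre (n + 1))
    ∧ (derivative (legendre (n + 1)) - X * derivative (legendre n)
        = C ((n : ℝ) + 1) * legendre n) := by
  induction n with
  | zero =>
      constructor <;> simp [legendre]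
  | succ n ih =>
      obtain ⟨hA, hB⟩ := ih
      have hrec := legendre_rec n
      have hrec' := congrArg derivative hrec
      simp only [derivative_mul, derivative_C, derivative_X, zero_mul, mul_one, zero_add,
        derivative_sub] at hrec'
      have h2 : (C ((n : ℝ) + 2) : Polynomial ℝ) ≠ 0 := by
        simp only [ne_eq, C_eq_zero]; positivity
      constructor
      · apply mul_left_cancel₀ h2
        push_cast
        simp only [map_add, map_mul, map_ofNat, map_one, show n + 1 + 1 = n + 2 from rfl] at hA hB hrec hrec' ⊢
        linear_combination X * hrec' + (2*C (n:ℝ)+3) * X * hA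
          - (C (n:ℝ)+2) * hB - (C (n:ℝ)+2) * hrec
      · apply mul_left_cancel₀ h2
        push_cast
        simp only [map_add, map_mul, map_ofNat, map_one, show n + 1 + 1 = n + 2 from rfl] at hA hB hrec hrec' ⊢
        linear_combination hrec' + (C (n:ℝ)+1) * hA

lemma legendre_deg (n : ℕ) : (legendre n).natDegree = n ∧ 0 < (legendre n).leadingCoeff := by
  induction n using Nat.twoStepInduction with
  | zero => constructor <;> simp [legendre]
  | one => constructor <;> simp [legendre]
  | more n ih1 ih2 =>
      obtain ⟨hd0, hl0⟩ := ih1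
      obtain ⟨hd1, hl1⟩ := ih2
      have ha : (0:ℝ) < (2 * (n:ℝ) + 3) / ((n:ℝ) + 2) := by positivity
      have hne1 : legendre (n + 1) ≠ 0 := leadingCoeff_ne_zero.mp (ne_of_gt hl1)
      have hCa : (C ((2 * (n:ℝ) + 3) / ((n:ℝ) + 2)) : Polynomial ℝ) ≠ 0 := by
        simp only [ne_eq, C_eq_zero]; positivity
      set p : Polynomial ℝ := C ((2 * (n:ℝ) + 3) / ((n:ℝ) + 2)) * X * legendre (n + 1) with hp
      set q : Polynomial ℝ := C (((n:ℝ) + 1) / ((n:ℝ) + 2)) * legendre n with hq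
      have hpd : p.natDegree = n + 2 := by
        rw [hp, natDegree_mul (mul_ne_zero hCa X_ne_zero) hne1, natDegree_mul hCa X_ne_zero,
          natDegree_C, natDegree_X, hd1]
        omega
      have hpl : 0 < p.leadingCoeff := by
        rw [hp, leadingCoeff_mul, leadingCoeff_mul, leadingCoeff_C, leadingCoeff_X, mul_one]
        positivity
      have hqd : q.natDegree < p.natDegree := by
        rw [hpd]
        exact lt_of_le_of_lt (le_trans (natDegree_C_mul_le _ _) (le_of_eq hd0)) (by omega)
      have hL : legendre (n + 2) = p - q := rfl
      constructor
      · rw [hL, natDegree_sub_eq_left_of_natDegree_lt hqd, hpd]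
      · rw [hL]
        have h1 : (p - q).natDegree = n + 2 := by
          rw [natDegree_sub_eq_left_of_natDegree_lt hqd, hpd]
        rw [leadingCoeff, h1, coeff_sub, coeff_eq_zero_of_natDegree_lt (by omega : q.natDegree < n + 2),
          sub_zero, ← hpd, ← leadingCoeff]
        exact hpl

lemma legendre_ne_zero (n : ℕ) : legendre n ≠ 0 :=
  leadingCoeff_ne_zero.mp (ne_of_gt (legendre_deg n).2)

lemma legendre_eval_one (n : ℕ) : (legendre n).eval 1 = 1 := by
  induction n using Nat.twoStepInduction with
  | zero => simp [legendre]
  | one => simp [legendre]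
  | more n ih1 ih2 =>
      have h2 : ((n:ℝ) + 2) ≠ 0 := by positivity
      show ((C ((2 * (n : ℝ) + 3) / ((n : ℝ) + 2)) * X * legendre (n + 1)
        - C (((n : ℝ) + 1) / ((n : ℝ) + 2)) * legendre n : Polynomial ℝ)).eval 1 = 1
      simp only [eval_sub, eval_mul, eval_C, eval_X, ih1, ih2, mul_one]
      field_simp
      ring

lemma legendre_eval_neg_one (n : ℕ) : (legendre n).eval (-1) = (-1) ^ n := by
  induction n using Nat.twoStepInduction with
  | zero => simp [legendre]
  | one => simp [legendre]
  | more n ih1 ih2 =>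
      have h2 : ((n:ℝ) + 2) ≠ 0 := by positivity
      show ((C ((2 * (n : ℝ) + 3) / ((n : ℝ) + 2)) * X * legendre (n + 1)
        - C (((n : ℝ) + 1) / ((n : ℝ) + 2)) * legendre n : Polynomial ℝ)).eval (-1) = (-1) ^ (n + 2)
      simp only [eval_sub, eval_mul, eval_C, eval_X, ih1, ih2, pow_succ]
      field_simp
      ring

lemma radau_Q_rel (m : ℕ) :
    (X - 1) * (derivative (legendre (m + 1)) + derivative (legendre m)) =
      C ((m : ℝ) + 1) * (legendre (m + 1) - legendre m) := by
  obtain ⟨hA, hB⟩ := legendre_AB m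
  linear_combination hA - hB

lemma radau_M_rel (m : ℕ) :
    (X + 1) * (derivative (legendre (m + 1)) - derivative (legendre m)) =
      C ((m : ℝ) + 1) * (legendre (m + 1) + legendre m) := by
  obtain ⟨hA, hB⟩ := legendre_AB m
  linear_combination hA + hB

lemma radau_ODE (m : ℕ) :
    (X ^ 2 - 1) * derivative (derivative (legendre (m + 1) - legendre m))
      + (X - 1) * derivative (legendre (m + 1) - legendre m)
    = C (((m : ℝ) + 1) ^ 2) * (legendre (m + 1) - legendre m) := by
  have h1 := radau_M_rel m
  have h1' := congrArg derivative h1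
  simp only [derivative_mul, derivative_add, derivative_sub, derivative_X, derivative_one,
    derivative_C, zero_add, add_zero, one_mul, zero_mul, mul_one] at h1'
  have h2 := radau_Q_rel m
  simp only [map_add, map_one] at h1 h1' h2
  simp only [derivative_sub, map_pow, map_add, map_one]
  linear_combination (X - 1) * h1' + (C (m:ℝ) + 1) * h2

lemma F_ode1 (m : ℕ) :
    (X ^ 2 - 1) * derivative ((X - 1) ^ (m + 2) * (X + 1) ^ (m + 1) : Polynomial ℝ) =
      (C (2 * (m : ℝ) + 3) * X + 1) * ((X - 1) ^ (m + 2) * (X + 1) ^ (m + 1)) := by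
  simp only [derivative_mul, derivative_pow, derivative_sub, derivative_add, derivative_X,
    derivative_one, sub_zero, add_zero, mul_one, Nat.add_sub_cancel]
  push_cast
  simp only [map_add, map_mul, map_ofNat, map_one, map_sub]
  ring

lemma ode_step (a b : ℝ) (p q : Polynomial ℝ) (hq : derivative q = p)
    (h : (X ^ 2 - 1) * derivative p = (C a * X + 1) * p + C b * q) :
    (X ^ 2 - 1) * derivative (derivative p) =
      (C (a - 2) * X + 1) * derivative p + C (a + b) * p := by
  have h' := congrArg derivative h
  simp only [derivative_mul, derivative_add, derivative_sub, derivative_one, derivative_X,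
    derivative_pow, derivative_C, hq, Nat.add_sub_cancel] at h'
  push_cast at h'
  simp only [map_add, map_mul, map_ofNat, map_one, map_sub] at h' ⊢
  linear_combination h'

lemma ode_step0 (a : ℝ) (p : Polynomial ℝ)
    (h : (X ^ 2 - 1) * derivative p = (C a * X + 1) * p) :
    (X ^ 2 - 1) * derivative (derivative p) =
      (C (a - 2) * X + 1) * derivative p + C a * p := by
  have h' := congrArg derivative h
  simp only [derivative_mul, derivative_add, derivative_sub, derivative_one, derivative_X,
    derivative_pow, derivative_C, Nat.add_sub_cancel] at h'
  push_cast at h'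
  simp only [map_add, map_mul, map_ofNat, map_one, map_sub] at h' ⊢
  linear_combination h'

lemma F_iter (m : ℕ) : ∀ k : ℕ,
    (X ^ 2 - 1) * derivative (derivative^[k + 1] ((X - 1) ^ (m + 2) * (X + 1) ^ (m + 1) : Polynomial ℝ)) =
      (C (2 * (m : ℝ) + 1 - 2 * k) * X + 1) *
          derivative^[k + 1] ((X - 1) ^ (m + 2) * (X + 1) ^ (m + 1) : Polynomial ℝ)
        + C (((k : ℝ) + 1) * (2 * (m : ℝ) + 3 - k)) *
            derivative^[k] ((X - 1) ^ (m + 2) * (X + 1) ^ (m + 1) : Polynomial ℝ) := by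
  intro k
  induction k with
  | zero =>
      have h := ode_step0 (2 * (m : ℝ) + 3) ((X - 1) ^ (m + 2) * (X + 1) ^ (m + 1) : Polynomial ℝ)
        (F_ode1 m)
      simp only [zero_add, Function.iterate_one, Function.iterate_zero_apply]
      simp only [map_add, map_mul, map_ofNat, map_one, map_sub, Nat.cast_zero, map_zero] at h ⊢
      linear_combination h
  | succ k ih =>
      have hq : derivative (derivative^[k] ((X - 1) ^ (m + 2) * (X + 1) ^ (m + 1) : Polynomial ℝ))
          = derivative^[k + 1] ((X - 1) ^ (m + 2) * (X + 1) ^ (m + 1) : Polynomial ℝ) :=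
        (Function.iterate_succ_apply' derivative k _).symm
      have h := ode_step (2 * (m : ℝ) + 1 - 2 * k) (((k : ℝ) + 1) * (2 * (m : ℝ) + 3 - k)) _ _ hq ih
      rw [show derivative (derivative^[k + 1] ((X - 1) ^ (m + 2) * (X + 1) ^ (m + 1) : Polynomial ℝ))
          = derivative^[k + 1 + 1] ((X - 1) ^ (m + 2) * (X + 1) ^ (m + 1) : Polynomial ℝ) from
        (Function.iterate_succ_apply' derivative (k + 1) _).symm] at h
      push_cast
      simp only [map_add, map_mul, map_ofNat, map_one, map_sub] at h ⊢
      linear_combination h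

lemma G_ode (m : ℕ) :
    (X ^ 2 - 1) * derivative (derivative (derivative^[m + 1]
        ((X - 1) ^ (m + 2) * (X + 1) ^ (m + 1) : Polynomial ℝ)))
      + (X - 1) * derivative (derivative^[m + 1]
        ((X - 1) ^ (m + 2) * (X + 1) ^ (m + 1) : Polynomial ℝ))
    = C (((m : ℝ) + 2) ^ 2) * derivative^[m + 1]
        ((X - 1) ^ (m + 2) * (X + 1) ^ (m + 1) : Polynomial ℝ) := by
  have h := F_iter m (m + 1)
  rw [show derivative^[m + 1 + 1] ((X - 1) ^ (m + 2) * (X + 1) ^ (m + 1) : Polynomial ℝ)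
      = derivative (derivative^[m + 1] ((X - 1) ^ (m + 2) * (X + 1) ^ (m + 1) : Polynomial ℝ)) from
    Function.iterate_succ_apply' derivative (m + 1) _] at h
  push_cast at h
  simp only [map_add, map_mul, map_ofNat, map_one, map_sub, map_pow] at h ⊢
  linear_combination h

lemma ode_coeff (Nr : ℝ) (y : Polynomial ℝ)
    (hy : (X ^ 2 - 1) * derivative (derivative y) + (X - 1) * derivative y = C (Nr ^ 2) * y)
    (k : ℕ) :
    ((k : ℝ) ^ 2 - Nr ^ 2) * y.coeff k =
      ((k : ℝ) + 2) * ((k : ℝ) + 1) * y.coeff (k + 2) + ((k : ℝ) + 1) * y.coeff (k + 1) := by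
  have hy2 : derivative (derivative y) * X ^ 2 - derivative (derivative y)
      + derivative y * X ^ 1 - derivative y = C (Nr ^ 2) * y := by linear_combination hy
  have h := congrArg (fun p => p.coeff k) hy2
  simp only [coeff_sub, coeff_add, coeff_mul_X_pow', coeff_derivative, coeff_C_mul] at h
  match k with
  | 0 =>
      norm_num at h ⊢
      linear_combination h
  | 1 =>
      norm_num at h ⊢
      linear_combination h
  | (j + 2) =>
      have h2 : (2 : ℕ) ≤ j + 2 := by omega
      have h1 : (1 : ℕ) ≤ j + 2 := by omega
      simp only [if_pos h2, if_pos h1, Nat.add_sub_cancel, show j + 2 - 1 = j + 1 from rfl] at h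
      push_cast at h ⊢
      linear_combination h

lemma ode_unique (n : ℕ) (y : Polynomial ℝ) (hdeg : y.natDegree ≤ n) (hcn : y.coeff n = 0)
    (hy : (X ^ 2 - 1) * derivative (derivative y) + (X - 1) * derivative y = C ((n : ℝ) ^ 2) * y) :
    y = 0 := by
  have key : ∀ d k, n ≤ k + d → y.coeff k = 0 := by
    intro d
    induction d with
    | zero =>
        intro k hk
        rcases eq_or_lt_of_le hk with h | h
        · have hkn : k = n := by omega
          rw [hkn]; exact hcn
        · exact coeff_eq_zero_of_natDegree_lt (lt_of_le_of_lt hdeg h)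
    | succ d ih =>
        intro k hk
        by_cases h : n ≤ k + d
        · exact ih k h
        · have hkn : k < n := by omega
          have h1 := ih (k + 1) (by omega)
          have h2 := ih (k + 2) (by omega)
          have h3 := ode_coeff ((n : ℝ)) y hy k
          rw [h1, h2, mul_zero, mul_zero, add_zero] at h3
          have hne : ((k : ℝ) ^ 2 - (n : ℝ) ^ 2) ≠ 0 := by
            have : (k : ℝ) < (n : ℝ) := by exact_mod_cast hkn
            have hk0 : (0 : ℝ) ≤ (k : ℝ) := Nat.cast_nonneg k
            nlinarith
          exact (mul_eq_zero.mp h3).resolve_left hne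
  apply Polynomial.ext
  intro j
  rw [coeff_zero]
  exact key n j (by omega)

lemma Q_natDegree (m : ℕ) : (legendre (m + 2) - legendre (m + 1)).natDegree = m + 2 := by
  have h1 := (legendre_deg (m + 2)).1
  have h2 := (legendre_deg (m + 1)).1
  rw [natDegree_sub_eq_left_of_natDegree_lt (by rw [h1, h2]; omega), h1]

lemma Q_coeff_ne (m : ℕ) : (legendre (m + 2) - legendre (m + 1)).coeff (m + 2) ≠ 0 := by
  have hz : (legendre (m + 1)).coeff (m + 2) = 0 :=
    coeff_eq_zero_of_natDegree_lt (by rw [(legendre_deg (m + 1)).1]; omega)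
  rw [coeff_sub, hz, sub_zero]
  have h : (legendre (m + 2)).coeff (m + 2) = (legendre (m + 2)).leadingCoeff := by
    rw [leadingCoeff, (legendre_deg (m + 2)).1]
  rw [h]
  exact ne_of_gt (legendre_deg (m + 2)).2

lemma Q_ne_zero (m : ℕ) : legendre (m + 2) - legendre (m + 1) ≠ 0 := by
  intro h
  exact Q_coeff_ne m (by rw [h, coeff_zero])

lemma F_monic (m : ℕ) : ((X - 1) ^ (m + 2) * (X + 1) ^ (m + 1) : Polynomial ℝ).Monic := by
  have h1 : (X - 1 : Polynomial ℝ) = X - C 1 := by rw [map_one]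
  have h2 : (X + 1 : Polynomial ℝ) = X + C 1 := by rw [map_one]
  rw [h1, h2]
  exact ((monic_X_sub_C (1:ℝ)).pow _).mul ((monic_X_add_C (1:ℝ)).pow _)

lemma F_natDegree (m : ℕ) :
    ((X - 1) ^ (m + 2) * (X + 1) ^ (m + 1) : Polynomial ℝ).natDegree = 2 * m + 3 := by
  have h1 : (X - 1 : Polynomial ℝ) = X - C 1 := by rw [map_one]
  have h2 : (X + 1 : Polynomial ℝ) = X + C 1 := by rw [map_one]
  rw [h1, h2, natDegree_mul (((monic_X_sub_C (1:ℝ)).pow _).ne_zero)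
    (((monic_X_add_C (1:ℝ)).pow _).ne_zero), natDegree_pow, natDegree_pow,
    natDegree_X_sub_C, natDegree_X_add_C]
  omega

lemma F_roots_card (m : ℕ) :
    Multiset.card (((X - 1) ^ (m + 2) * (X + 1) ^ (m + 1) : Polynomial ℝ).roots) = 2 * m + 3 := by
  have h1 : (X - 1 : Polynomial ℝ) = X - C 1 := by rw [map_one]
  have h2 : (X + 1 : Polynomial ℝ) = X - C (-1) := by rw [map_neg, map_one, sub_neg_eq_add]
  rw [h1, h2, roots_mul (mul_ne_zero (((monic_X_sub_C (1:ℝ)).pow _).ne_zero)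
      (((monic_X_sub_C (-1:ℝ)).pow _).ne_zero)), roots_pow, roots_pow,
    roots_X_sub_C, roots_X_sub_C]
  simp only [Multiset.card_add, Multiset.card_nsmul, Multiset.card_singleton]
  omega

lemma G_roots_card (m : ℕ) :
    m + 2 ≤ Multiset.card ((derivative^[m + 1]
      ((X - 1) ^ (m + 2) * (X + 1) ^ (m + 1) : Polynomial ℝ)).roots) := by
  have key : ∀ k, Multiset.card (((X - 1) ^ (m + 2) * (X + 1) ^ (m + 1) : Polynomial ℝ).roots)
      ≤ Multiset.card ((derivative^[k]
        ((X - 1) ^ (m + 2) * (X + 1) ^ (m + 1) : Polynomial ℝ)).roots) + k := by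
    intro k
    induction k with
    | zero => simp
    | succ k ih =>
        have h := card_roots_le_derivative (derivative^[k]
          ((X - 1) ^ (m + 2) * (X + 1) ^ (m + 1) : Polynomial ℝ))
        rw [← Function.iterate_succ_apply' derivative k] at h
        simp only [Nat.succ_eq_add_one] at h ⊢
        omega
  have h := key (m + 1)
  rw [F_roots_card] at h
  omega

lemma G_coeff (m : ℕ) :
    (derivative^[m + 1] ((X - 1) ^ (m + 2) * (X + 1) ^ (m + 1) : Polynomial ℝ)).coeff (m + 2)
      = ((2 * m + 3).descFactorial (m + 1) : ℝ) := by
  rw [coeff_iterate_derivative, show m + 2 + (m + 1) = 2 * m + 3 from by omega,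
    show ((X - 1) ^ (m + 2) * (X + 1) ^ (m + 1) : Polynomial ℝ).coeff (2 * m + 3) = 1 from by
      rw [← F_natDegree m, coeff_natDegree]; exact F_monic m]
  simp [nsmul_eq_mul]

lemma G_coeff_ne (m : ℕ) :
    (derivative^[m + 1] ((X - 1) ^ (m + 2) * (X + 1) ^ (m + 1) : Polynomial ℝ)).coeff (m + 2)
      ≠ 0 := by
  rw [G_coeff]
  have h : (2 * m + 3).descFactorial (m + 1) ≠ 0 := by
    rw [ne_eq, Nat.descFactorial_eq_zero_iff_lt]
    omega
  exact_mod_cast h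

lemma Q_eq_CG (m : ℕ) : legendre (m + 2) - legendre (m + 1) =
    C ((legendre (m + 2) - legendre (m + 1)).coeff (m + 2) /
        (derivative^[m + 1] ((X - 1) ^ (m + 2) * (X + 1) ^ (m + 1) : Polynomial ℝ)).coeff (m + 2))
      * derivative^[m + 1] ((X - 1) ^ (m + 2) * (X + 1) ^ (m + 1) : Polynomial ℝ) := by
  set c : ℝ := (legendre (m + 2) - legendre (m + 1)).coeff (m + 2) /
      (derivative^[m + 1] ((X - 1) ^ (m + 2) * (X + 1) ^ (m + 1) : Polynomial ℝ)).coeff (m + 2)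
    with hc
  have hdeg : (legendre (m + 2) - legendre (m + 1)
      - C c * derivative^[m + 1] ((X - 1) ^ (m + 2) * (X + 1) ^ (m + 1) : Polynomial ℝ)).natDegree
      ≤ m + 2 := by
    refine le_trans (natDegree_sub_le _ _) (max_le (le_of_eq (Q_natDegree m)) ?_)
    refine le_trans (natDegree_C_mul_le _ _) (le_trans (natDegree_iterate_derivative _ _) ?_)
    rw [F_natDegree]
    omega
  have hcoeff : (legendre (m + 2) - legendre (m + 1)
      - C c * derivative^[m + 1] ((X - 1) ^ (m + 2) * (X + 1) ^ (m + 1) : Polynomial ℝ)).coeff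
        (m + 2) = 0 := by
    rw [coeff_sub, coeff_C_mul, hc, div_mul_cancel₀ _ (G_coeff_ne m), sub_self]
  have hQode := radau_ODE (m + 1)
  have hGode := G_ode m
  have hode : (X ^ 2 - 1) * derivative (derivative (legendre (m + 2) - legendre (m + 1)
        - C c * derivative^[m + 1] ((X - 1) ^ (m + 2) * (X + 1) ^ (m + 1) : Polynomial ℝ)))
      + (X - 1) * derivative (legendre (m + 2) - legendre (m + 1)
        - C c * derivative^[m + 1] ((X - 1) ^ (m + 2) * (X + 1) ^ (m + 1) : Polynomial ℝ))
      = C (((m + 2 : ℕ) : ℝ) ^ 2) * (legendre (m + 2) - legendre (m + 1)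
        - C c * derivative^[m + 1] ((X - 1) ^ (m + 2) * (X + 1) ^ (m + 1) : Polynomial ℝ)) := by
    simp only [derivative_sub, derivative_mul, derivative_C, zero_mul, zero_add]
    push_cast at hQode hGode ⊢
    simp only [map_pow, map_add, map_mul, map_ofNat, map_one, map_sub] at hQode hGode ⊢
    linear_combination hQode - C c * hGode
  have hzero := ode_unique (m + 2) _ hdeg hcoeff hode
  linear_combination hzero

lemma Q_count (m : ℕ) (t : ℝ) :
    (legendre (m + 2) - legendre (m + 1)).roots.count t ≤ 1 := by
  classical
  by_contra hcon
  push_neg at hcon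
  rw [count_roots] at hcon
  have hQne : legendre (m + 2) - legendre (m + 1) ≠ 0 := Q_ne_zero m
  have hroot : (legendre (m + 2) - legendre (m + 1)).IsRoot t :=
    (rootMultiplicity_pos hQne).mp (by omega)
  have htne : t ≠ -1 := by
    intro h
    have he : (legendre (m + 2) - legendre (m + 1)).eval (-1) = (-1) ^ (m + 2) - (-1) ^ (m + 1) := by
      rw [eval_sub, legendre_eval_neg_one, legendre_eval_neg_one]
    rw [IsRoot, h, he] at hroot
    have hpm : ((-1 : ℝ)) ^ m ≠ 0 := pow_ne_zero _ (by norm_num)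
    have h2 : ((-1 : ℝ)) ^ (m + 2) - (-1) ^ (m + 1) = 2 * (-1) ^ m := by ring
    rw [h2] at hroot
    exact hpm (by linarith)
  have hQ'ne : derivative (legendre (m + 2) - legendre (m + 1)) ≠ 0 := by
    intro h
    have h0 := natDegree_eq_zero_of_derivative_eq_zero h
    rw [Q_natDegree] at h0
    omega
  have hm1 : rootMultiplicity t (derivative (legendre (m + 2) - legendre (m + 1)))
      = rootMultiplicity t (legendre (m + 2) - legendre (m + 1)) - 1 :=
    derivative_rootMultiplicity_of_root hroot
  have hroot' : (derivative (legendre (m + 2) - legendre (m + 1))).IsRoot t :=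
    (rootMultiplicity_pos hQ'ne).mp (by rw [hm1]; omega)
  have hQ''ne : derivative (derivative (legendre (m + 2) - legendre (m + 1))) ≠ 0 := by
    intro h
    have h0 := natDegree_eq_zero_of_derivative_eq_zero h
    have hC := eq_C_of_natDegree_eq_zero h0
    rw [hC, rootMultiplicity_C] at hm1
    omega
  have hm2 : rootMultiplicity t (derivative (derivative (legendre (m + 2) - legendre (m + 1))))
      = rootMultiplicity t (legendre (m + 2) - legendre (m + 1)) - 2 := by
    rw [derivative_rootMultiplicity_of_root hroot', hm1]
    omega
  have hX1 : (X - 1 : Polynomial ℝ) = X - C 1 := by rw [map_one]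
  have hX2 : (X ^ 2 - 1 : Polynomial ℝ) = (X - C 1) * (X - C (-1)) := by
    rw [map_neg, map_one, sub_neg_eq_add]
    ring
  have hXne : (X - C (1:ℝ) : Polynomial ℝ) ≠ 0 := (monic_X_sub_C (1:ℝ)).ne_zero
  have hXne' : (X - C (-1:ℝ) : Polynomial ℝ) ≠ 0 := (monic_X_sub_C (-1:ℝ)).ne_zero
  have he1 : rootMultiplicity t (X - C (1:ℝ)) ≤ 1 := by
    rw [rootMultiplicity_X_sub_C]
    split <;> omega
  have he1' : rootMultiplicity t (X - C (-1:ℝ)) = 0 := by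
    rw [rootMultiplicity_X_sub_C, if_neg htne]
  have hmul1 : rootMultiplicity t ((X - 1) * derivative (legendre (m + 2) - legendre (m + 1)))
      = rootMultiplicity t (X - C (1:ℝ))
        + (rootMultiplicity t (legendre (m + 2) - legendre (m + 1)) - 1) := by
    rw [hX1, rootMultiplicity_mul (mul_ne_zero hXne hQ'ne), hm1]
  have hmul2 : rootMultiplicity t
        ((X ^ 2 - 1) * derivative (derivative (legendre (m + 2) - legendre (m + 1))))
      = rootMultiplicity t (X - C (1:ℝ))
        + (rootMultiplicity t (legendre (m + 2) - legendre (m + 1)) - 2) := by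
    rw [hX2, rootMultiplicity_mul (mul_ne_zero (mul_ne_zero hXne hXne') hQ''ne),
      rootMultiplicity_mul (mul_ne_zero hXne hXne'), he1', hm2]
    omega
  have hCne : (C ((((m + 1 : ℕ) : ℝ) + 1) ^ 2) : Polynomial ℝ) ≠ 0 := by
    simp only [ne_eq, C_eq_zero]
    positivity
  have hmul3 : rootMultiplicity t
        (C ((((m + 1 : ℕ) : ℝ) + 1) ^ 2) * (legendre (m + 2) - legendre (m + 1)))
      = rootMultiplicity t (legendre (m + 2) - legendre (m + 1)) := by
    rw [rootMultiplicity_mul (mul_ne_zero hCne hQne), rootMultiplicity_C]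
    omega
  set a := rootMultiplicity t (X - C (1:ℝ))
      + (rootMultiplicity t (legendre (m + 2) - legendre (m + 1)) - 2) with ha
  have hd1 : (X - C t) ^ (a + 1) ∣ (X - 1) * derivative (legendre (m + 2) - legendre (m + 1)) := by
    rw [hX1]
    refine (le_rootMultiplicity_iff (mul_ne_zero hXne hQ'ne)).mp ?_
    rw [← hX1, hmul1]
    omega
  have hd2 : (X - C t) ^ (a + 1) ∣
      C ((((m + 1 : ℕ) : ℝ) + 1) ^ 2) * (legendre (m + 2) - legendre (m + 1)) := by
    refine (le_rootMultiplicity_iff (mul_ne_zero hCne hQne)).mp ?_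
    rw [hmul3]
    omega
  have hODE := radau_ODE (m + 1)
  have hd3 : (X - C t) ^ (a + 1) ∣
      (X ^ 2 - 1) * derivative (derivative (legendre (m + 2) - legendre (m + 1))) := by
    have hrw : (X ^ 2 - 1) * derivative (derivative (legendre (m + 2) - legendre (m + 1)))
        = C ((((m + 1 : ℕ) : ℝ) + 1) ^ 2) * (legendre (m + 2) - legendre (m + 1))
          - (X - 1) * derivative (legendre (m + 2) - legendre (m + 1)) := by
      push_cast
      push_cast at hODE
      linear_combination hODE
    rw [hrw]
    exact dvd_sub hd2 hd1
  have hle := (le_rootMultiplicity_iff (by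
      rw [hX2]
      exact mul_ne_zero (mul_ne_zero hXne hXne') hQ''ne)).mpr hd3
  rw [hmul2] at hle
  omega

lemma Q_roots_finset (m : ℕ) : ∃ s : Finset ℝ, s.card = m + 2 ∧
    ∀ x ∈ s, (legendre (m + 2) - legendre (m + 1)).eval x = 0 := by
  classical
  have hcne : (legendre (m + 2) - legendre (m + 1)).coeff (m + 2) /
      (derivative^[m + 1] ((X - 1) ^ (m + 2) * (X + 1) ^ (m + 1) : Polynomial ℝ)).coeff (m + 2)
      ≠ 0 := div_ne_zero (Q_coeff_ne m) (G_coeff_ne m)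
  have hcard : Multiset.card ((legendre (m + 2) - legendre (m + 1)).roots) = m + 2 := by
    refine le_antisymm (le_trans (card_roots' _) (le_of_eq (Q_natDegree m))) ?_
    rw [Q_eq_CG m, roots_C_mul _ hcne]
    exact G_roots_card m
  have hnodup : (legendre (m + 2) - legendre (m + 1)).roots.Nodup :=
    Multiset.nodup_iff_count_le_one.mpr (Q_count m)
  refine ⟨(legendre (m + 2) - legendre (m + 1)).roots.toFinset, ?_, ?_⟩
  · rw [Multiset.toFinset_card_of_nodup hnodup, hcard]
  · intro x hx
    rw [Multiset.mem_toFinset] at hx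
    exact (mem_roots'.mp hx).2

lemma R_deriv (m : ℕ) (α β : ℝ) (h1 : α * ((m : ℝ) + 2) - β = (m : ℝ) + 2)
    (h2 : α - β * ((m : ℝ) + 2) = 0) :
    derivative (C α * ((legendre (m + 2) + legendre (m + 1)) * (X - 1))
        - C β * ((legendre (m + 2) - legendre (m + 1)) * (X + 1)))
      = C ((m : ℝ) + 2) * (legendre (m + 2) - legendre (m + 1)) := by
  have hq := radau_Q_rel (m + 1)
  have hm := radau_M_rel (m + 1)
  have h1C := congrArg C h1
  have h2C := congrArg C h2
  push_cast at hq hm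
  simp only [derivative_sub, derivative_mul, derivative_add, derivative_C, derivative_X,
    derivative_one, zero_mul, zero_add, add_zero, mul_one]
  simp only [map_add, map_mul, map_sub, map_ofNat, map_one, map_zero] at hq hm h1C h2C ⊢
  linear_combination C α * hq - C β * hm + (legendre (m + 2) - legendre (m + 1)) * h1C
    + (legendre (m + 2) + legendre (m + 1)) * h2C

theorem stmt_18 (N : ℕ) (hN : 2 ≤ N) (u uN : Polynomial ℝ)
    (hu : u.natDegree ≤ N + 1) (huN : uN.natDegree ≤ N)
    (hinit : uN.eval (-1) = u.eval (-1))
    (hcol : ∀ x : ℝ, (legendre N - legendre (N - 1)).eval x = 0 →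
      (derivative uN).eval x = (derivative u).eval x) :
    ∃ c : ℝ, ∀ x : ℝ,
      u.eval x - uN.eval x =
        c * (((N : ℝ) ^ 2 / ((N : ℝ) ^ 2 - 1)) *
              ((legendre N).eval x + (legendre (N - 1)).eval x) * (x - 1)
            - ((N : ℝ) / ((N : ℝ) ^ 2 - 1)) *
              ((legendre N).eval x - (legendre (N - 1)).eval x) * (x + 1)) := by
  obtain ⟨m, rfl⟩ : ∃ m, N = m + 2 := ⟨N - 2, by omega⟩
  simp only [show m + 2 - 1 = m + 1 from by omega] at hcol ⊢
  have hm2 : ((m : ℝ) + 2) ≠ 0 := by positivity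
  have hmc : (0 : ℝ) ≤ (m : ℝ) := Nat.cast_nonneg m
  have hm21 : ((m : ℝ) + 2) ^ 2 - 1 ≠ 0 := by nlinarith
  obtain ⟨s, hscard, hsroot⟩ := Q_roots_finset m
  have hedeg : (derivative u - derivative uN).natDegree ≤ m + 2 := by
    refine le_trans (natDegree_sub_le _ _) (max_le ?_ ?_)
    · exact le_trans (natDegree_derivative_le u) (by omega)
    · exact le_trans (natDegree_derivative_le uN) (by omega)
  set c₁ : ℝ := (derivative u - derivative uN).coeff (m + 2) /
      ((legendre (m + 2) - legendre (m + 1)).coeff (m + 2)) with hc₁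
  have hp0 : derivative u - derivative uN = C c₁ * (legendre (m + 2) - legendre (m + 1)) := by
    by_cases hp : derivative u - derivative uN
        - C c₁ * (legendre (m + 2) - legendre (m + 1)) = 0
    · linear_combination hp
    · exfalso
      apply hp
      have hpd : (derivative u - derivative uN
          - C c₁ * (legendre (m + 2) - legendre (m + 1))).natDegree ≤ m + 2 :=
        le_trans (natDegree_sub_le _ _) (max_le hedeg
          (le_trans (natDegree_C_mul_le _ _) (le_of_eq (Q_natDegree m))))
      have hpc : (derivative u - derivative uN
          - C c₁ * (legendre (m + 2) - legendre (m + 1))).coeff (m + 2) = 0 := by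
        rw [coeff_sub, coeff_C_mul, hc₁, div_mul_cancel₀ _ (Q_coeff_ne m), sub_self]
      have hplt : (derivative u - derivative uN
          - C c₁ * (legendre (m + 2) - legendre (m + 1))).natDegree < m + 2 := by
        rcases lt_or_eq_of_le hpd with h | h
        · exact h
        · exact absurd (leadingCoeff_eq_zero.mp (by rw [leadingCoeff, h]; exact hpc)) hp
      refine eq_zero_of_natDegree_lt_card_of_eval_eq_zero' _ s ?_ (by rw [hscard]; exact hplt)
      intro i hi
      have hq0 := hsroot i hi
      have hcol' := hcol i hq0
      rw [eval_sub, eval_sub, eval_mul, eval_C, hq0, hcol', mul_zero, sub_zero, sub_self]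
  set α : ℝ := ((m : ℝ) + 2) ^ 2 / (((m : ℝ) + 2) ^ 2 - 1) with hα
  set β : ℝ := ((m : ℝ) + 2) / (((m : ℝ) + 2) ^ 2 - 1) with hβ
  have h1 : α * ((m : ℝ) + 2) - β = (m : ℝ) + 2 := by
    rw [hα, hβ]
    field_simp
  have h2 : α - β * ((m : ℝ) + 2) = 0 := by
    rw [hα, hβ]
    field_simp
    ring
  have hRd := R_deriv m α β h1 h2
  have hw : derivative (u - uN - C (c₁ / ((m : ℝ) + 2)) *
      (C α * ((legendre (m + 2) + legendre (m + 1)) * (X - 1))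
        - C β * ((legendre (m + 2) - legendre (m + 1)) * (X + 1)))) = 0 := by
    rw [derivative_sub, derivative_mul, derivative_C, zero_mul, zero_add, hRd, ← mul_assoc,
      ← C_mul, div_mul_cancel₀ _ hm2, derivative_sub]
    linear_combination hp0
  have hwC := eq_C_of_derivative_eq_zero hw
  have hReval : eval (-1 : ℝ) (C α * ((legendre (m + 2) + legendre (m + 1)) * (X - 1))
      - C β * ((legendre (m + 2) - legendre (m + 1)) * (X + 1))) = 0 := by
    simp only [eval_sub, eval_mul, eval_add, eval_C, eval_X, eval_one, legendre_eval_neg_one]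
    have e1 : ((-1 : ℝ)) ^ (m + 2) = (-1) ^ m := by ring
    have e2 : ((-1 : ℝ)) ^ (m + 1) = -(-1) ^ m := by ring
    rw [e1, e2]
    ring
  have hwval : eval (-1 : ℝ) (u - uN - C (c₁ / ((m : ℝ) + 2)) *
      (C α * ((legendre (m + 2) + legendre (m + 1)) * (X - 1))
        - C β * ((legendre (m + 2) - legendre (m + 1)) * (X + 1)))) = 0 := by
    rw [eval_sub, eval_mul, eval_C, hReval, mul_zero, sub_zero, eval_sub, hinit, sub_self]
  have hw0 : u - uN - C (c₁ / ((m : ℝ) + 2)) *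
      (C α * ((legendre (m + 2) + legendre (m + 1)) * (X - 1))
        - C β * ((legendre (m + 2) - legendre (m + 1)) * (X + 1))) = 0 := by
    rw [hwC] at hwval ⊢
    rw [eval_C] at hwval
    rw [hwval, map_zero]
  refine ⟨c₁ / ((m : ℝ) + 2), ?_⟩
  intro x
  have hx := congrArg (eval x) hw0
  simp only [eval_sub, eval_mul, eval_add, eval_C, eval_X, eval_zero, eval_one] at hx
  rw [hα, hβ] at hx
  push_cast
  linear_combination hx
end
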